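/- Let κ be a regular uncountable cardinal and G a graph with vertex set κ. If the set T = {α < κ : some vertex β ≥ α has at least μ neighbours in α} is stationary in κ, then G is isomorphic to a μ-ladder, i.e., there is a permutation π of κ and a stationary set S ⊆ κ such that in the graph π(G), every α ∈ S has at least μ neighbours below α. -/

import Mathlib

open Cardinal

universe u v

/-- A well-ordering of the vertices of `G` in which every vertex has
fewer than `μ` neighbours preceding it (a *good* well-ordering for `μ`). -/
def HasGoodOrder {V : Type u} (G : SimpleGraph V) (μ : Cardinal.{u}) : Prop :=
  ∃ r : V → V → Prop, IsWellOrder V r ∧ ∀ v : V, #{w : V | G.Adj v w ∧ r w v} < μ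

/-- The colouring number of `G`: the least cardinal `κ` admitting a
well-ordering of the vertices in which each vertex has fewer than `κ`
earlier neighbours. -/
noncomputable def col {V : Type u} (G : SimpleGraph V) : Cardinal.{u} :=
  sInf {μ : Cardinal.{u} | HasGoodOrder G μ}

/-- `X` is robust (for `μ`): every vertex outside `X` has fewer than `μ`
neighbours inside `X`. -/
def Robust {V : Type u} (G : SimpleGraph V) (μ : Cardinal.{u}) (X : Set V) : Prop :=
  ∀ v ∉ X, #(G.neighborSet v ∩ X : Set V) < μ

/-- `G` contains a `μ`-barricade as a subgraph: disjoint vertex sets `A`, `B`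
with `|A| < |B|` such that every vertex of `B` has at least `μ` neighbours in `A`. -/
def HasBarricade {V : Type u} (G : SimpleGraph V) (μ : Cardinal.{u}) : Prop :=
  ∃ A B : Set V, Disjoint A B ∧ #A < #B ∧
    ∀ b ∈ B, μ ≤ #(G.neighborSet b ∩ A : Set V)

/-- `G` contains a `μ`-obstruction of type I as a subgraph: disjoint sets `A`, `B`
with `|A| = λ ≥ μ`, `|B| = λ⁺`, every vertex of `B` having at least `μ`
neighbours in `A` and every vertex of `A` having `λ⁺` neighbours in `B`. -/
def HasTypeIObstruction {V : Type u} (G : SimpleGraph V) (μ : Cardinal.{u}) : Prop :=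
  ∃ (A B : Set V) (lam : Cardinal.{u}), Disjoint A B ∧ μ ≤ lam ∧
    #A = lam ∧ #B = Order.succ lam ∧
    (∀ b ∈ B, μ ≤ #(G.neighborSet b ∩ A : Set V)) ∧
    (∀ a ∈ A, #(G.neighborSet a ∩ B : Set V) = Order.succ lam)

/-- `G` itself is a `μ`-obstruction of type I: a bipartite graph with
bipartition `(A, B)` satisfying the type I conditions. -/
def IsTypeIObstruction {V : Type u} (G : SimpleGraph V) (μ : Cardinal.{u}) : Prop :=
  ∃ (A B : Set V) (lam : Cardinal.{u}), Disjoint A B ∧ A ∪ B = Set.univ ∧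
    (∀ a b, G.Adj a b → (a ∈ A ∧ b ∈ B) ∨ (a ∈ B ∧ b ∈ A)) ∧
    μ ≤ lam ∧ #A = lam ∧ #B = Order.succ lam ∧
    (∀ b ∈ B, μ ≤ #(G.neighborSet b ∩ A : Set V)) ∧
    (∀ a ∈ A, #(G.neighborSet a ∩ B : Set V) = Order.succ lam)

/-- `C` is closed and unbounded in the ordinal `o`. -/
def IsClubIn (C : Set Ordinal.{v}) (o : Ordinal.{v}) : Prop :=
  (∀ a < o, ∃ b ∈ C, a ≤ b ∧ b < o) ∧
  (∀ a < o, a ≠ 0 → sSup (C ∩ Set.Iio a) = a → a ∈ C)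

/-- `S` is stationary in the ordinal `o`: it meets every club subset of `o`. -/
def IsStationaryIn (S : Set Ordinal.{v}) (o : Ordinal.{v}) : Prop :=
  ∀ C : Set Ordinal.{v}, IsClubIn C o → (S ∩ C ∩ Set.Iio o).Nonempty

/-- The set `T_H` of vertices `α` (ordinals) with `cf α = cf μ`, whose set of
neighbours below `α` has order type `μ` and supremum `α`. -/
noncomputable def typeIITarget (H : SimpleGraph Ordinal.{v}) (μ : Cardinal.{v}) :
    Set Ordinal.{v} :=
  {α | α.cof = μ.ord.cof ∧
    Ordinal.type (Subrel ((· < ·) : Ordinal.{v} → Ordinal.{v} → Prop)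
      (· ∈ H.neighborSet α ∩ Set.Iio α)) = Ordinal.lift.{v + 1} μ.ord ∧
    sSup (H.neighborSet α ∩ Set.Iio α) = α}

/-- `H` is a `μ`-obstruction of type II with vertex set the regular cardinal
`κ > μ` (realised as the ordinals below `κ`): `T_H` is stationary in `κ`. -/
def IsTypeIIObstruction (H : SimpleGraph Ordinal.{v}) (μ κ : Cardinal.{v}) : Prop :=
  μ < κ ∧ κ.IsRegular ∧ (∀ a b, H.Adj a b → a < κ.ord ∧ b < κ.ord) ∧
  IsStationaryIn (typeIITarget H μ) κ.ord

/-- `G` contains a `μ`-obstruction of type II as a subgraph. -/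
def HasTypeIIObstruction {V : Type u} (G : SimpleGraph V) (μ : Cardinal.{v}) : Prop :=
  ∃ (κ : Cardinal.{v}) (H : SimpleGraph Ordinal.{v}) (f : Ordinal.{v} → V),
    Set.InjOn f (Set.Iio κ.ord) ∧ (∀ a b, H.Adj a b → G.Adj (f a) (f b)) ∧
    IsTypeIIObstruction H μ κ

/-- `G` contains a complete subgraph on `μ` vertices. -/
def HasCompleteSubgraph {V : Type u} (G : SimpleGraph V) (μ : Cardinal.{u}) : Prop :=
  ∃ S : Set V, #S = μ ∧ S.Pairwise G.Adj

/-- `G` contains an induced copy of the complete bipartite graph `K_{k,ω}`. -/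
def HasInducedKkOmega {V : Type u} (G : SimpleGraph V) (k : ℕ) : Prop :=
  ∃ A B : Set V, Disjoint A B ∧ #A = (k : Cardinal.{u}) ∧ #B = ℵ₀ ∧
    (∀ a ∈ A, ∀ b ∈ B, G.Adj a b) ∧
    (∀ a ∈ A, ∀ a' ∈ A, a ≠ a' → ¬ G.Adj a a') ∧
    (∀ b ∈ B, ∀ b' ∈ B, b ≠ b' → ¬ G.Adj b b')

namespace Stmt11Aux

open Ordinal Set

lemma sSup_inter_Iio_le {C : Set Ordinal.{0}} {a : Ordinal.{0}} :
    sSup (C ∩ Set.Iio a) ≤ a := by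
  rcases (C ∩ Set.Iio a).eq_empty_or_nonempty with h | h
  · rw [h, csSup_empty]; exact bot_le
  · exact csSup_le h fun x hx => hx.2.le

lemma bddAbove_inter_Iio {C : Set Ordinal.{0}} {a : Ordinal.{0}} :
    BddAbove (C ∩ Set.Iio a) :=
  ⟨a, fun _ hy => hy.2.le⟩

/-- Intersection of two clubs in `κ.ord` (for `κ` regular uncountable) is a club. -/
lemma isClubIn_inter {κ : Cardinal.{0}} (hreg : κ.IsRegular) (hunc : ℵ₀ < κ)
    {C D : Set Ordinal.{0}} (hC : IsClubIn C κ.ord) (hD : IsClubIn D κ.ord) :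
    IsClubIn (C ∩ D) κ.ord := by
  have hlim : Order.IsSuccLimit κ.ord := Cardinal.isSuccLimit_ord hreg.aleph0_le
  have hcof : (κ.ord).cof = κ := hreg.cof_eq
  constructor
  · -- unboundedness
    intro a ha
    have stepC : ∀ x : Ordinal.{0}, ∃ c, x < κ.ord → (c ∈ C ∧ x < c ∧ c < κ.ord) := by
      intro x
      by_cases hx : x < κ.ord
      · obtain ⟨c, h1, h2, h3⟩ := hC.1 (Order.succ x) (hlim.succ_lt hx)
        exact ⟨c, fun _ => ⟨h1, (Order.lt_succ x).trans_le h2, h3⟩⟩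
      · exact ⟨0, fun h => absurd h hx⟩
    have stepD : ∀ x : Ordinal.{0}, ∃ c, x < κ.ord → (c ∈ D ∧ x < c ∧ c < κ.ord) := by
      intro x
      by_cases hx : x < κ.ord
      · obtain ⟨c, h1, h2, h3⟩ := hD.1 (Order.succ x) (hlim.succ_lt hx)
        exact ⟨c, fun _ => ⟨h1, (Order.lt_succ x).trans_le h2, h3⟩⟩
      · exact ⟨0, fun h => absurd h hx⟩
    choose fC hfC using stepC
    choose fD hfD using stepD
    set x : ℕ → Ordinal.{0} := fun n => Nat.rec a (fun _ ih => fD (fC ih)) n with hxdef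
    have hx0 : x 0 = a := rfl
    have hxs : ∀ n, x (n + 1) = fD (fC (x n)) := fun n => rfl
    have hxκ : ∀ n, x n < κ.ord := by
      intro n
      induction n with
      | zero => exact ha
      | succ n ih =>
        rw [hxs]
        exact (hfD _ ((hfC _ ih).2.2)).2.2
    have hxlt : ∀ n, x n < fC (x n) := fun n => (hfC _ (hxκ n)).2.1
    have hflt : ∀ n, fC (x n) < x (n + 1) := by
      intro n; rw [hxs]; exact (hfD _ ((hfC _ (hxκ n)).2.2)).2.1
    have hmono : ∀ n, x n < x (n + 1) := fun n => (hxlt n).trans (hflt n)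
    set b : Ordinal.{0} := ⨆ n, x n with hbdef
    have hxb : ∀ n, x n ≤ b := fun n => Ordinal.le_iSup x n
    have hbκ : b < κ.ord := by
      apply Ordinal.iSup_lt_ord _ hxκ
      rw [hcof, Cardinal.mk_nat]; exact hunc
    have hab : a ≤ b := hx0 ▸ hxb 0
    have hbne : b ≠ 0 := by
      have : (0 : Ordinal) ≤ x 0 := zero_le
      have h1 : (0 : Ordinal) < x 1 := this.trans_lt (hmono 0)
      exact fun h => absurd (h ▸ (h1.trans_le (hxb 1))) (lt_irrefl 0)
    have hbC : b ∈ C := by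
      apply hC.2 b hbκ hbne
      apply le_antisymm sSup_inter_Iio_le
      rw [hbdef]
      apply Ordinal.iSup_le
      intro n
      have hmem : fC (x n) ∈ C ∩ Set.Iio b :=
        ⟨(hfC _ (hxκ n)).1, (hflt n).trans_le (hxb (n + 1))⟩
      exact (hxlt n).le.trans (le_csSup bddAbove_inter_Iio hmem)
    have hbD : b ∈ D := by
      apply hD.2 b hbκ hbne
      apply le_antisymm sSup_inter_Iio_le
      rw [hbdef]
      apply Ordinal.iSup_le
      intro n
      have hmemD : x (n + 1) ∈ D := by rw [hxs]; exact (hfD _ ((hfC _ (hxκ n)).2.2)).1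
      have hltb : x (n + 1) < b := (hmono (n + 1)).trans_le (hxb (n + 2))
      exact (hmono n).le.trans (le_csSup bddAbove_inter_Iio ⟨hmemD, hltb⟩)
    exact ⟨b, ⟨hbC, hbD⟩, hab, hbκ⟩
  · -- closedness
    intro a ha hane hsup
    have hne : (C ∩ D ∩ Set.Iio a).Nonempty := by
      rcases (C ∩ D ∩ Set.Iio a).eq_empty_or_nonempty with h | h
      · exfalso; apply hane; rw [← hsup, h, csSup_empty]; rfl
      · exact h
    have key : ∀ E : Set Ordinal.{0}, C ∩ D ⊆ E → sSup (E ∩ Set.Iio a) = a := by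
      intro E hE
      apply le_antisymm sSup_inter_Iio_le
      calc a = sSup (C ∩ D ∩ Set.Iio a) := hsup.symm
        _ ≤ sSup (E ∩ Set.Iio a) :=
          csSup_le_csSup bddAbove_inter_Iio hne
            (fun y hy => ⟨hE hy.1, hy.2⟩)
    exact ⟨hC.2 a ha hane (key C fun y hy => hy.1),
           hD.2 a ha hane (key D fun y hy => hy.2)⟩

/-- The set of ordinals closed under a `κ.ord`-bounded function is a club in `κ.ord`. -/
lemma isClubIn_closure {κ : Cardinal.{0}} (hreg : κ.IsRegular) (hunc : ℵ₀ < κ)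
    (g : Ordinal.{0} → Ordinal.{0}) (hg : ∀ x < κ.ord, g x < κ.ord) :
    IsClubIn {γ : Ordinal.{0} | ∀ α < γ, g α < γ} κ.ord := by
  have hlim : Order.IsSuccLimit κ.ord := Cardinal.isSuccLimit_ord hreg.aleph0_le
  have hcof : (κ.ord).cof = κ := hreg.cof_eq
  constructor
  · intro a ha
    have step : ∀ x : Ordinal.{0}, ∃ y, x < κ.ord →
        (x < y ∧ y < κ.ord ∧ ∀ α < x, g α < y) := by
      intro x
      by_cases hx : x < κ.ord
      · refine ⟨Order.succ (max x (Ordinal.bsup x (fun b _ => g b))), fun _ => ?_⟩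
        refine ⟨(le_max_left _ _).trans_lt (Order.lt_succ _), ?_, ?_⟩
        · apply hlim.succ_lt
          apply max_lt hx
          apply Ordinal.bsup_lt_ord (by rw [hcof]; exact Cardinal.lt_ord.mp hx)
          exact fun b hb => hg b (hb.trans hx)
        · intro α hα
          exact ((Ordinal.le_bsup (fun b _ => g b) α hα).trans
            (le_max_right _ _)).trans_lt (Order.lt_succ _)
      · exact ⟨0, fun h => absurd h hx⟩
    choose f hf using step
    set x : ℕ → Ordinal.{0} := fun n => Nat.rec a (fun _ ih => f ih) n with hxdef
    have hx0 : x 0 = a := rfl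
    have hxs : ∀ n, x (n + 1) = f (x n) := fun n => rfl
    have hxκ : ∀ n, x n < κ.ord := by
      intro n
      induction n with
      | zero => exact ha
      | succ n ih => rw [hxs]; exact (hf _ ih).2.1
    have hmono : ∀ n, x n < x (n + 1) := by
      intro n; rw [hxs]; exact (hf _ (hxκ n)).1
    set b : Ordinal.{0} := ⨆ n, x n with hbdef
    have hxb : ∀ n, x n ≤ b := fun n => Ordinal.le_iSup x n
    have hbκ : b < κ.ord := by
      apply Ordinal.iSup_lt_ord _ hxκ
      rw [hcof, Cardinal.mk_nat]; exact hunc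
    refine ⟨b, ?_, hx0 ▸ hxb 0, hbκ⟩
    intro α hα
    rw [hbdef] at hα
    obtain ⟨n, hn⟩ := Ordinal.lt_iSup_iff.mp hα
    have hfb : f (x n) ≤ b := by rw [← hxs n]; exact hxb (n + 1)
    exact ((hf _ (hxκ n)).2.2 α hn).trans_le hfb
  · intro a ha hane hsup
    have hne : ({γ : Ordinal.{0} | ∀ α < γ, g α < γ} ∩ Set.Iio a).Nonempty := by
      rcases ({γ : Ordinal.{0} | ∀ α < γ, g α < γ} ∩ Set.Iio a).eq_empty_or_nonempty with h | h
      · exfalso; apply hane; rw [← hsup, h, csSup_empty]; rfl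
      · exact h
    intro α hα
    have : α < sSup ({γ : Ordinal.{0} | ∀ α < γ, g α < γ} ∩ Set.Iio a) := by
      rw [hsup]; exact hα
    obtain ⟨γ, hγ, hαγ⟩ := exists_lt_of_lt_csSup hne this
    exact (hγ.1 α hαγ).trans hγ.2

end Stmt11Aux

/-- second case of the regular-cardinal argument. If
`T = {α < κ : some β ≥ α has ≥ μ neighbours below α}` is stationary, then `G`
is isomorphic (via a permutation `π` of `κ`) to a `μ`-ladder. -/
theorem stmt11 (μ κ : Cardinal.{0}) (hμ : ℵ₀ ≤ μ) (hμκ : μ < κ)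
    (hreg : κ.IsRegular) (hunc : ℵ₀ < κ)
    (G : SimpleGraph Ordinal.{0}) (hsupp : ∀ a b, G.Adj a b → a < κ.ord ∧ b < κ.ord)
    (hstat : IsStationaryIn {α | α < κ.ord ∧ ∃ β, α ≤ β ∧ β < κ.ord ∧
      Cardinal.lift.{1} μ ≤ #(G.neighborSet β ∩ Set.Iio α : Set Ordinal.{0})} κ.ord) :
    ∃ π : Ordinal.{0} → Ordinal.{0},
      Set.BijOn π (Set.Iio κ.ord) (Set.Iio κ.ord) ∧
      ∃ S : Set Ordinal.{0}, IsStationaryIn S κ.ord ∧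
        ∀ α ∈ S, Cardinal.lift.{1} μ ≤
          #{β : Ordinal.{0} | β < α ∧ ∃ a b, a < κ.ord ∧ b < κ.ord ∧
            G.Adj a b ∧ π a = α ∧ π b = β} := by
  classical
  set T : Set Ordinal.{0} := {α | α < κ.ord ∧ ∃ β, α ≤ β ∧ β < κ.ord ∧
      Cardinal.lift.{1} μ ≤ #(G.neighborSet β ∩ Set.Iio α : Set Ordinal.{0})} with hTdef
  -- choose witnesses
  set g : Ordinal.{0} → Ordinal.{0} := fun α => if h : α ∈ T then h.2.choose else α with hgdef
  have hg1 : ∀ α, α ≤ g α := by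
    intro α
    rw [hgdef]
    by_cases h : α ∈ T
    · simp only [h, dif_pos]; exact h.2.choose_spec.1
    · simp [h]
  have hg2 : ∀ α < κ.ord, g α < κ.ord := by
    intro α hα
    rw [hgdef]
    by_cases h : α ∈ T
    · simp only [h, dif_pos]; exact h.2.choose_spec.2.1
    · simpa [h] using hα
  have hg3 : ∀ α ∈ T, Cardinal.lift.{1} μ ≤
      #(G.neighborSet (g α) ∩ Set.Iio α : Set Ordinal.{0}) := by
    intro α h
    rw [hgdef]
    simp only [h, dif_pos]
    exact h.2.choose_spec.2.2
  set Cf : Set Ordinal.{0} := {γ | ∀ α < γ, g α < γ} with hCfdef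
  have hCf : IsClubIn Cf κ.ord := Stmt11Aux.isClubIn_closure hreg hunc g hg2
  set S : Set Ordinal.{0} := T ∩ Cf with hSdef
  have hST : S ⊆ T := fun x hx => hx.1
  have hSκ : ∀ α ∈ S, α < κ.ord := fun α hα => (hST hα).1
  -- key: members of Cf absorb g-images of smaller ordinals
  have hkey : ∀ γ ∈ Cf, ∀ α < γ, g α < γ := fun γ hγ => hγ
  -- g is injective on S, and g-fixed points interact well with S
  have hginj : ∀ α ∈ S, ∀ α' ∈ S, g α = g α' → α = α' := by
    intro α hα α' hα' he
    by_contra hne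
    rcases lt_or_gt_of_ne hne with h | h
    · exact absurd (he ▸ hkey α' hα'.2 α h) (not_lt.mpr (hg1 α'))
    · exact absurd (he ▸ hkey α hα.2 α' h) (not_lt.mpr (hg1 α))
  have hSfix : ∀ α ∈ S, g α ∈ S → g α = α := by
    intro α hα h
    rcases eq_or_lt_of_le (hg1 α) with he | hlt
    · exact he.symm
    · exact absurd (hkey (g α) h.2 α hlt) (lt_irrefl _)
  -- the permutation
  set π : Ordinal.{0} → Ordinal.{0} := fun x =>
    if x ∈ S then g x else if h : ∃ α, α ∈ S ∧ g α = x then h.choose else x with hπdef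
  have hπS : ∀ x ∈ S, π x = g x := by
    intro x hx; rw [hπdef]; simp [hx]
  have hπinv : ∀ x, x ∉ S → (h : ∃ α, α ∈ S ∧ g α = x) →
      π x = h.choose ∧ h.choose ∈ S ∧ g h.choose = x := by
    intro x hx h
    refine ⟨?_, h.choose_spec.1, h.choose_spec.2⟩
    rw [hπdef]; simp [hx, h]
  have hπid : ∀ x, x ∉ S → (¬ ∃ α, α ∈ S ∧ g α = x) → π x = x := by
    intro x hx h; rw [hπdef]; simp [hx, h]
  have hinvol : Function.Involutive π := by
    intro x
    by_cases hx : x ∈ S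
    · rw [hπS x hx]
      by_cases hgx : g x ∈ S
      · have := hSfix x hx hgx
        rw [this, hπS x hx, this]
      · have hex : ∃ α, α ∈ S ∧ g α = g x := ⟨x, hx, rfl⟩
        obtain ⟨h1, h2, h3⟩ := hπinv (g x) hgx hex
        rw [h1]
        exact hginj _ h2 _ hx h3
    · by_cases hex : ∃ α, α ∈ S ∧ g α = x
      · obtain ⟨h1, h2, h3⟩ := hπinv x hx hex
        rw [h1, hπS _ h2, h3]
      · rw [hπid x hx hex, hπid x hx hex]
  have hπmaps : ∀ x < κ.ord, π x < κ.ord := by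
    intro x hxκ
    by_cases hx : x ∈ S
    · rw [hπS x hx]; exact hg2 x hxκ
    · by_cases hex : ∃ α, α ∈ S ∧ g α = x
      · obtain ⟨h1, h2, _⟩ := hπinv x hx hex
        rw [h1]; exact hSκ _ h2
      · rwa [hπid x hx hex]
  -- π shrinks below members of Cf
  have hπlt : ∀ γ ∈ Cf, ∀ b < γ, π b < γ := by
    intro γ hγ b hb
    by_cases hx : b ∈ S
    · rw [hπS b hx]; exact hkey γ hγ b hb
    · by_cases hex : ∃ α, α ∈ S ∧ g α = b
      · obtain ⟨h1, h2, h3⟩ := hπinv b hx hex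
        rw [h1]
        exact ((hg1 _).trans_eq h3).trans_lt hb
      · rwa [hπid b hx hex]
  refine ⟨π, ?_, S, ?_, ?_⟩
  · -- bijectivity on Iio κ.ord
    have hmt : Set.MapsTo π (Set.Iio κ.ord) (Set.Iio κ.ord) := fun x hx => hπmaps x hx
    exact Set.InvOn.bijOn ⟨fun x _ => hinvol x, fun x _ => hinvol x⟩ hmt hmt
  · -- S is stationary
    intro C hC
    have hclub : IsClubIn (Cf ∩ C) κ.ord :=
      Stmt11Aux.isClubIn_inter hreg hunc hCf hC
    obtain ⟨α, ⟨hαT, hαCfC⟩, hακ⟩ := hstat (Cf ∩ C) hclub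
    exact ⟨α, ⟨⟨hαT, hαCfC.1⟩, hαCfC.2⟩, hακ⟩
  · -- the ladder property
    intro α hα
    have hαT : α ∈ T := hST hα
    have hακ : α < κ.ord := hαT.1
    have hπα : π (g α) = α := by
      have := hinvol α
      rwa [hπS α hα] at this
    set N : Set Ordinal.{0} := (G.neighborSet (g α) ∩ Set.Iio α : Set Ordinal.{0}) with hNdef
    have hinj : Set.InjOn π N := fun x _ y _ h => hinvol.injective h
    have hsub : π '' N ⊆ {β : Ordinal.{0} | β < α ∧ ∃ a b, a < κ.ord ∧ b < κ.ord ∧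
        G.Adj a b ∧ π a = α ∧ π b = β} := by
      rintro _ ⟨b, ⟨hbN, hbα⟩, rfl⟩
      refine ⟨hπlt α hα.2 b hbα, g α, b, hg2 α hακ, hbα.trans hακ, hbN, hπα, rfl⟩
    calc Cardinal.lift.{1} μ ≤ #N := hg3 α hαT
      _ = #(π '' N) := (Cardinal.mk_image_eq_of_injOn π N hinj).symm
      _ ≤ _ := Cardinal.mk_le_mk_of_subset hsub
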